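/- For any real numbers x > 1 and A > 0 and δ > 0, the quantity f_A^-(x) = (x^2+1)^2 (1 - e^{-Aδ})(1 + e^{-Aδx}) - 4x (1 + e^{-Aδ})(1 - e^{-Aδx}) is strictly positive. -/

import Mathlib

/-- Convexity step: `x·e^{-ax} ≤ e^{-a} + (x-1)·e^{-a(x+1)}` for `x > 1`. -/
lemma exp_convex_step (x a : ℝ) (hx : 1 < x) :
    x * Real.exp (-(a * x)) ≤ Real.exp (-a) + (x - 1) * Real.exp (-(a * (x + 1))) := by
  have hx0 : 0 < x := by linarith
  have h := convexOn_exp.2 (Set.mem_univ (-a)) (Set.mem_univ (-(a * (x + 1))))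
      (by positivity : (0:ℝ) ≤ 1 / x)
      (by rw [le_div_iff₀ hx0]; ring_nf; linarith : (0:ℝ) ≤ (x - 1) / x)
      (by field_simp; ring)
  simp only [smul_eq_mul] at h
  have hpt : (1 / x) * (-a) + ((x - 1) / x) * (-(a * (x + 1))) = -(a * x) := by
    field_simp; ring
  rw [hpt] at h
  have := mul_le_mul_of_nonneg_left h (le_of_lt hx0)
  calc x * Real.exp (-(a * x)) ≤ x * (1 / x * Real.exp (-a) + (x - 1) / x * Real.exp (-(a * (x + 1)))) := this
    _ = Real.exp (-a) + (x - 1) * Real.exp (-(a * (x + 1))) := by field_simp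

/-- Monotonicity step: `F a ≥ 0` for `a ≥ 0`, where
`F a = x - 1 - (x+1) e^{-a} + (x+1) e^{-ax} - (x-1) e^{-a(x+1)}`. -/
lemma F_nonneg (x a : ℝ) (hx : 1 < x) (ha : 0 ≤ a) :
    0 ≤ x - 1 - (x + 1) * Real.exp (-a) + (x + 1) * Real.exp (-(a * x))
      - (x - 1) * Real.exp (-(a * (x + 1))) := by
  set F : ℝ → ℝ := fun a => x - 1 - (x + 1) * Real.exp (-a) + (x + 1) * Real.exp (-(a * x))
      - (x - 1) * Real.exp (-(a * (x + 1))) with hF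
  have hder : ∀ b : ℝ, HasDerivAt F
      ((x + 1) * Real.exp (-b) - x * (x + 1) * Real.exp (-(b * x))
        + (x - 1) * (x + 1) * Real.exp (-(b * (x + 1)))) b := by
    intro b
    have h1 : HasDerivAt (fun t : ℝ => Real.exp (-t)) (-Real.exp (-b)) b := by
      simpa using ((hasDerivAt_id b).neg).exp
    have h2 : HasDerivAt (fun t : ℝ => Real.exp (-(t * x))) (Real.exp (-(b * x)) * -x) b := by
      simpa using (((hasDerivAt_id b).mul_const x).neg).exp
    have h3 : HasDerivAt (fun t : ℝ => Real.exp (-(t * (x + 1))))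
        (Real.exp (-(b * (x + 1))) * -(x + 1)) b := by
      simpa using (((hasDerivAt_id b).mul_const (x + 1)).neg).exp
    have := (((hasDerivAt_const b (x - 1)).sub (h1.const_mul (x + 1))).add
        (h2.const_mul (x + 1))).sub (h3.const_mul (x - 1))
    refine this.congr_deriv ?_
    ring
  have hmono : MonotoneOn F (Set.Ici (0:ℝ)) := by
    apply monotoneOn_of_deriv_nonneg (convex_Ici 0)
    · exact fun b _ => (hder b).continuousAt.continuousWithinAt
    · exact fun b _ => (hder b).differentiableAt.differentiableWithinAt
    · intro b _
      rw [(hder b).deriv]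
      have key := exp_convex_step x b hx
      nlinarith [Real.exp_pos (-(b * (x + 1))), Real.exp_pos (-b)]
  have h0 : F 0 = 0 := by simp [hF]
  have := hmono (Set.self_mem_Ici) (Set.mem_Ici.mpr ha) ha
  rw [h0] at this
  exact this

/-- For real `x > 1`, `A > 0`, `δ > 0`, the quantity
`f_A^-(x) = (x²+1)² (1 - e^{-Aδ})(1 + e^{-Aδx}) - 4x (1 + e^{-Aδ})(1 - e^{-Aδx})`
is strictly positive. -/
theorem fAminus_pos (x A δ : ℝ) (hx : 1 < x) (hA : 0 < A) (hδ : 0 < δ) :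
    0 < (x ^ 2 + 1) ^ 2 * (1 - Real.exp (-(A * δ))) * (1 + Real.exp (-(A * δ * x)))
        - 4 * x * (1 + Real.exp (-(A * δ))) * (1 - Real.exp (-(A * δ * x))) := by
  set a := A * δ with ha
  have ha0 : 0 < a := mul_pos hA hδ
  have key := F_nonneg x a hx ha0.le
  have huv : Real.exp (-(a * (x + 1))) = Real.exp (-a) * Real.exp (-(a * x)) := by
    rw [← Real.exp_add]; ring_nf
  rw [huv] at key
  have hu1 : Real.exp (-a) < 1 := Real.exp_lt_one_iff.mpr (by linarith)
  have hv1 : Real.exp (-(a * x)) < 1 := Real.exp_lt_one_iff.mpr (by nlinarith)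
  have hu0 := Real.exp_pos (-a)
  have hv0 := Real.exp_pos (-(a * x))
  have hgap : 0 < (x ^ 2 - 1) ^ 2 * ((1 - Real.exp (-a)) * (1 + Real.exp (-(a * x)))) := by
    have hx2 : 0 < x ^ 2 - 1 := by nlinarith
    have : 0 < (x ^ 2 - 1) ^ 2 := by positivity
    have h2 : 0 < (1 - Real.exp (-a)) * (1 + Real.exp (-(a * x))) := by nlinarith
    exact mul_pos this h2
  nlinarith [mul_nonneg (by linarith : (0:ℝ) ≤ 4 * x) key]
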